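/- For every positive integer s, every positive integer k, and every integer m ≥ s·k, Duplicator wins the game ehr[T_1^{(s,k,m)}, T_2^{(s,k,m)}, s; k] in which Spoiler starts playing on T_1^{(s,k,m)}. -/

import Mathlib

/-! ## Rooted trees -/

/-- A rooted tree structure: a vertex type, a root, and a parent map
(`parent v = none` is intended to hold exactly when `v` is the root). -/
structure RTree where
  V : Type
  root : V
  parent : V → Option V

namespace RTree

/-- Iterate the parent map `n` times. -/
def parentIter (T : RTree) : ℕ → T.V → Option T.V
  | 0, v => some v
  | n + 1, v => (T.parent v).bind (T.parentIter n)

/-- `u` is a descendant of `v` (possibly `u = v`). -/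
def IsDesc (T : RTree) (v u : T.V) : Prop :=
  ∃ n, T.parentIter n u = some v

/-- The structure is a genuine rooted, locally finite tree:
exactly the root has no parent, every vertex reaches the root by iterating
the parent map (connectivity and acyclicity), and every vertex has finitely
many children (local finiteness). -/
def IsTree (T : RTree) : Prop :=
  (∀ v, T.parent v = none ↔ v = T.root) ∧
  (∀ v, ∃ n, T.parentIter n v = some T.root) ∧
  (∀ v, {u | T.parent u = some v}.Finite)

open Classical in
/-- The subtree `T(v)` consisting of `v` and all its descendants, rooted at `v`. -/
noncomputable def subtree (T : RTree) (v : T.V) : RTree where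
  V := {u : T.V // T.IsDesc v u}
  root := ⟨v, 0, rfl⟩
  parent u :=
    if u.1 = v then none
    else (T.parent u.1).bind fun w =>
      if h : T.IsDesc v w then some ⟨w, h⟩ else none

end RTree

/-- An isomorphism of rooted trees: a bijection of vertices mapping root to
root and commuting with the parent maps. -/
structure TreeIso (S T : RTree) where
  toEquiv : S.V ≃ T.V
  map_root : toEquiv S.root = T.root
  map_parent : ∀ v, (S.parent v).map toEquiv = T.parent (toEquiv v)

/-! ## First-order logic of rooted trees -/

/-- Terms: variables (de Bruijn indices) and the constant `R` for the root. -/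
inductive FOTerm where
  | var : ℕ → FOTerm
  | root : FOTerm
deriving DecidableEq

/-- First-order formulas in the language of rooted trees: equality `x = y`,
the parent relation `parentOf t t'` (meaning `π(t') = t`, i.e. `t` is the
parent of `t'`), Boolean connectives, and quantifiers (de Bruijn style). -/
inductive FOFormula where
  | eq : FOTerm → FOTerm → FOFormula
  | parentOf : FOTerm → FOTerm → FOFormula
  | not : FOFormula → FOFormula
  | and : FOFormula → FOFormula → FOFormula
  | or : FOFormula → FOFormula → FOFormula
  | imp : FOFormula → FOFormula → FOFormula
  | all : FOFormula → FOFormula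
  | ex : FOFormula → FOFormula
deriving DecidableEq

namespace FOTerm

def eval (T : RTree) (env : ℕ → T.V) : FOTerm → T.V
  | var n => env n
  | root => T.root

def freeBound : FOTerm → ℕ
  | var n => n + 1
  | root => 0

end FOTerm

/-- Kinds of quantifiers, used to count alternations. -/
inductive QKind where
  | ex | all
deriving DecidableEq

/-- The dual of a quantifier kind. -/
def QKind.dual : QKind → QKind
  | .ex => .all
  | .all => .ex

namespace FOFormula

/-- Satisfaction of a formula in a rooted tree under an environment. -/
def Sat (T : RTree) : FOFormula → (ℕ → T.V) → Prop
  | eq t₁ t₂, env => t₁.eval T env = t₂.eval T env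
  | parentOf t₁ t₂, env => T.parent (t₂.eval T env) = some (t₁.eval T env)
  | not φ, env => ¬ φ.Sat T env
  | and φ ψ, env => φ.Sat T env ∧ ψ.Sat T env
  | or φ ψ, env => φ.Sat T env ∨ ψ.Sat T env
  | imp φ ψ, env => φ.Sat T env → ψ.Sat T env
  | all φ, env => ∀ w : T.V, φ.Sat T (fun n => match n with | 0 => w | Nat.succ k => env k)
  | ex φ, env => ∃ w : T.V, φ.Sat T (fun n => match n with | 0 => w | Nat.succ k => env k)

/-- Quantifier depth: the maximum number of nested quantifiers. -/
def qd : FOFormula → ℕ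
  | eq _ _ => 0
  | parentOf _ _ => 0
  | not φ => φ.qd
  | and φ ψ => max φ.qd ψ.qd
  | or φ ψ => max φ.qd ψ.qd
  | imp φ ψ => max φ.qd ψ.qd
  | all φ => φ.qd + 1
  | ex φ => φ.qd + 1

/-- Auxiliary alternation count: `aqdAux φ pol q` is the maximum number of
alternations between (effectively) existential and universal quantifiers along
a nested quantifier sequence of `φ`, given the current polarity `pol`
(`true` = positive; negations and antecedents of implications flip it, so that
e.g. a `∀` under a negation counts as an `∃`) and the effective kind `q` of
the innermost enclosing quantifier (if any). -/
def aqdAux : FOFormula → Bool → Option QKind → ℕ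
  | eq _ _, _, _ => 0
  | parentOf _ _, _, _ => 0
  | not φ, pol, q => φ.aqdAux (!pol) q
  | and φ ψ, pol, q => max (φ.aqdAux pol q) (ψ.aqdAux pol q)
  | or φ ψ, pol, q => max (φ.aqdAux pol q) (ψ.aqdAux pol q)
  | imp φ ψ, pol, q => max (φ.aqdAux (!pol) q) (ψ.aqdAux pol q)
  | all φ, pol, q =>
      (if q = some (if pol then QKind.ex else QKind.all) then 1 else 0) +
        φ.aqdAux pol (some (if pol then QKind.all else QKind.ex))
  | ex φ, pol, q =>
      (if q = some (if pol then QKind.all else QKind.ex) then 1 else 0) +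
        φ.aqdAux pol (some (if pol then QKind.ex else QKind.all))

/-- The number of alternations of quantifiers of a formula: the maximum number
of switches between (effectively) existential and universal quantifiers in a
nested quantifier sequence.  Purely existential or purely universal formulas
have `aqd = 0`. -/
def aqd (φ : FOFormula) : ℕ := φ.aqdAux true none

/-- A bound on the free variables of a formula: all free de Bruijn indices
are `< freeBound`. -/
def freeBound : FOFormula → ℕ
  | eq t₁ t₂ => max t₁.freeBound t₂.freeBound
  | parentOf t₁ t₂ => max t₁.freeBound t₂.freeBound
  | not φ => φ.freeBound
  | and φ ψ => max φ.freeBound ψ.freeBound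
  | or φ ψ => max φ.freeBound ψ.freeBound
  | imp φ ψ => max φ.freeBound ψ.freeBound
  | all φ => φ.freeBound - 1
  | ex φ => φ.freeBound - 1

/-- A sentence is a formula with no free variables. -/
def IsSentence (φ : FOFormula) : Prop := φ.freeBound = 0

end FOFormula

/-- A (closed) formula holds in a rooted tree. -/
def Models (T : RTree) (φ : FOFormula) : Prop :=
  φ.Sat T (fun _ => T.root)

/-- The formula `P_i(x)`, with free variable `x` being de Bruijn index `0`:
`P_0(x) = ∀ y ¬(π(y) = x)` and `P_{i+1}(x) = ∀ y (π(y) = x → ¬ P_i(y))`. -/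
def Pform : ℕ → FOFormula
  | 0 => .all (.not (.parentOf (.var 1) (.var 0)))
  | i + 1 => .all (.imp (.parentOf (.var 1) (.var 0)) (.not (Pform i)))

/-- The sentence `KEIN_i = P_i(R)`. -/
def KEIN : ℕ → FOFormula
  | 0 => .all (.not (.parentOf .root (.var 0)))
  | i + 1 => .all (.imp (.parentOf .root (.var 0)) (.not (Pform i)))

/-! ## Ehrenfeucht games -/

/-- The winning condition for Duplicator: for all pairs `(x_i, y_i)`, `(x_j, y_j)`
in the list of selected/designated pairs, (Main 1) `π(x_j) = x_i ↔ π(y_j) = y_i`,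
and (Main 2) `x_i = x_j ↔ y_i = y_j`. -/
def GoodPairs (T₁ T₂ : RTree) (ps : List (T₁.V × T₂.V)) : Prop :=
  ∀ p ∈ ps, ∀ q ∈ ps,
    (T₁.parent p.1 = some q.1 ↔ T₂.parent p.2 = some q.2) ∧
    (p.1 = q.1 ↔ p.2 = q.2)

/-- Duplicator wins the scheduled Ehrenfeucht game on `T₁, T₂` in which Spoiler
must play his moves in consecutive batches, the batch sizes given by the list
`sched`, switching trees after each batch; `side = true` means Spoiler currently
plays on `T₁` (Duplicator answering on `T₂`), `side = false` means Spoiler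
currently plays on `T₂`.  The list `ps` records the pairs selected so far
(including designated pairs and the pair of roots); Duplicator wins when the
final configuration satisfies `GoodPairs`. -/
def DupWinsSched (T₁ T₂ : RTree) : List ℕ → Bool → List (T₁.V × T₂.V) → Prop
  | [], _, ps => GoodPairs T₁ T₂ ps
  | 0 :: rest, side, ps => DupWinsSched T₁ T₂ rest (!side) ps
  | (n + 1) :: rest, side, ps =>
      if side then
        ∀ x : T₁.V, ∃ y : T₂.V, DupWinsSched T₁ T₂ (n :: rest) side ((x, y) :: ps)
      else
        ∀ y : T₂.V, ∃ x : T₁.V, DupWinsSched T₁ T₂ (n :: rest) side ((x, y) :: ps)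
termination_by sched _ _ => (sched.length, sched.sum)
decreasing_by
  all_goals
    first
      | exact Prod.Lex.left _ _ (Nat.lt_succ_self _)
      | exact Prod.Lex.right _ (by simp [List.sum_cons])

/-- The cost (in switches) for Spoiler of playing on side `side` when his
previous move (if any) was on side `last`. -/
def switchCost (last : Option Bool) (side : Bool) : ℕ :=
  match last with
  | none => 0
  | some b => if b = side then 0 else 1

/-- Duplicator wins the Ehrenfeucht game `EHR` with `rounds` remaining rounds,
`sw` remaining switches allowed to Spoiler, `last` the side on which Spoiler
made his previous move (if any), and `ps` the pairs selected so far.  In each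
round Spoiler picks a side (paying a switch if he changes trees, which he may
do only if he has switches left) and a vertex in that tree, and Duplicator
answers in the other tree. -/
def DupWinsEHRAux (T₁ T₂ : RTree) :
    ℕ → ℕ → Option Bool → List (T₁.V × T₂.V) → Prop
  | 0, _, _, ps => GoodPairs T₁ T₂ ps
  | r + 1, sw, last, ps =>
      ∀ side : Bool, switchCost last side ≤ sw →
        if side then
          ∀ x : T₁.V, ∃ y : T₂.V,
            DupWinsEHRAux T₁ T₂ r (sw - switchCost last side) (some side) ((x, y) :: ps)
        else
          ∀ y : T₂.V, ∃ x : T₁.V,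
            DupWinsEHRAux T₁ T₂ r (sw - switchCost last side) (some side) ((x, y) :: ps)

/-- Duplicator wins the game `EHR[T₁, T₂, s, r]`: `r` rounds, Spoiler may start
on either tree and make at most `s` switches. -/
def DupWinsEHR (T₁ T₂ : RTree) (s r : ℕ) : Prop :=
  DupWinsEHRAux T₁ T₂ r s none [(T₁.root, T₂.root)]

/-! ## The trees `T₁^{(s,k,m)}` and `T₂^{(s,k,m)}` -/

/-- The one-vertex rooted tree. -/
def single : RTree where
  V := PUnit
  root := PUnit.unit
  parent := fun _ => none

/-- Hang the trees `f 0, …, f (n-1)` from a new root: the root of each `f i`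
becomes a child of the new root. -/
def hang (n : ℕ) (f : Fin n → RTree) : RTree where
  V := Unit ⊕ (Σ i : Fin n, (f i).V)
  root := Sum.inl ()
  parent := fun x =>
    match x with
    | Sum.inl _ => none
    | Sum.inr ⟨i, w⟩ =>
      match (f i).parent w with
      | none => some (Sum.inl ())
      | some w' => some (Sum.inr ⟨i, w'⟩)

/-- The pair of trees `(T₁^{(s,k,m)}, T₂^{(s,k,m)})`, indexed by `s` (the
parameter `k` plays no role in the construction).  Conventions for `s = 0`:
`T₁^{(0)}` is a single vertex and `T₂^{(0)}` is a star of `m` childless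
children.  For `s ≥ 1`: in `T₁^{(s+1)}` the root has `m+1` children, from each
of which hangs a copy of `T₂^{(s)}`; in `T₂^{(s+1)}` the root has `m+1`
children, from `m` of which hangs a copy of `T₂^{(s)}` and from the remaining
one hangs a copy of `T₁^{(s)}`. -/
def TreePair (m : ℕ) : ℕ → RTree × RTree
  | 0 => (single, hang m fun _ => single)
  | s + 1 =>
      (hang (m + 1) fun _ => (TreePair m s).2,
       hang (m + 1) fun i => if i.1 = m then (TreePair m s).1 else (TreePair m s).2)

/-- The tree `T₁^{(s,k,m)}`. -/
def Tree1 (s k m : ℕ) : RTree := (TreePair m s).1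

/-- The tree `T₂^{(s,k,m)}`. -/
def Tree2 (s k m : ℕ) : RTree := (TreePair m s).2

/-! ### Auxiliary game lemmas -/

theorem goodPairs_mono {T₁ T₂ : RTree} {ps qs : List (T₁.V × T₂.V)}
    (h : ∀ a ∈ ps, a ∈ qs) (hq : GoodPairs T₁ T₂ qs) : GoodPairs T₁ T₂ ps :=
  fun p hp q hqq => hq p (h p hp) q (h q hqq)

theorem dws_nil {T₁ T₂ : RTree} {side : Bool} {ps : List (T₁.V × T₂.V)} :
    DupWinsSched T₁ T₂ [] side ps ↔ GoodPairs T₁ T₂ ps := by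
  rw [DupWinsSched]

theorem dws_zero {T₁ T₂ : RTree} {side : Bool} {rest} {ps : List (T₁.V × T₂.V)} :
    DupWinsSched T₁ T₂ (0 :: rest) side ps ↔ DupWinsSched T₁ T₂ rest (!side) ps := by
  rw [DupWinsSched]

theorem dws_succ_true {T₁ T₂ : RTree} {n rest} {ps : List (T₁.V × T₂.V)} :
    DupWinsSched T₁ T₂ ((n+1) :: rest) true ps ↔
      ∀ x : T₁.V, ∃ y : T₂.V, DupWinsSched T₁ T₂ (n :: rest) true ((x, y) :: ps) := by
  rw [DupWinsSched]; simp

theorem dws_succ_false {T₁ T₂ : RTree} {n rest} {ps : List (T₁.V × T₂.V)} :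
    DupWinsSched T₁ T₂ ((n+1) :: rest) false ps ↔
      ∀ y : T₂.V, ∃ x : T₁.V, DupWinsSched T₁ T₂ (n :: rest) false ((x, y) :: ps) := by
  rw [DupWinsSched]; simp

theorem dup_mono (T₁ T₂ : RTree) :
    ∀ (sched : List ℕ) (side : Bool) (ps qs : List (T₁.V × T₂.V)),
      (∀ a ∈ ps, a ∈ qs) → DupWinsSched T₁ T₂ sched side qs → DupWinsSched T₁ T₂ sched side ps
  | [], _, _, _, h, hq => dws_nil.2 (goodPairs_mono h (dws_nil.1 hq))
  | 0 :: rest, side, ps, qs, h, hq =>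
      dws_zero.2 (dup_mono T₁ T₂ rest (!side) ps qs h (dws_zero.1 hq))
  | (n+1) :: rest, true, ps, qs, h, hq => by
      rw [dws_succ_true] at hq ⊢
      intro x
      obtain ⟨y, hy⟩ := hq x
      exact ⟨y, dup_mono T₁ T₂ (n :: rest) true ((x,y) :: ps) ((x,y) :: qs)
        (by intro a ha; rcases List.mem_cons.1 ha with h' | h'
            · exact h' ▸ List.mem_cons_self
            · exact List.mem_cons_of_mem _ (h a h')) hy⟩
  | (n+1) :: rest, false, ps, qs, h, hq => by
      rw [dws_succ_false] at hq ⊢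
      intro y
      obtain ⟨x, hx⟩ := hq y
      exact ⟨x, dup_mono T₁ T₂ (n :: rest) false ((x,y) :: ps) ((x,y) :: qs)
        (by intro a ha; rcases List.mem_cons.1 ha with h' | h'
            · exact h' ▸ List.mem_cons_self
            · exact List.mem_cons_of_mem _ (h a h')) hx⟩
  termination_by sched _ _ _ => (sched.length, sched.sum)
  decreasing_by
    all_goals
      first
        | exact Prod.Lex.left _ _ (Nat.lt_succ_self _)
        | exact Prod.Lex.right _ (by simp [List.sum_cons])

theorem dup_pass {T₁ T₂ : RTree} {n rest side} {ps : List (T₁.V × T₂.V)}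
    (h : DupWinsSched T₁ T₂ ((n+1) :: rest) side ps) :
    DupWinsSched T₁ T₂ (n :: rest) side ps := by
  cases side
  · rw [dws_succ_false] at h
    obtain ⟨x, hx⟩ := h T₂.root
    exact dup_mono T₁ T₂ _ _ ps _ (fun a ha => List.mem_cons_of_mem _ ha) hx
  · rw [dws_succ_true] at h
    obtain ⟨y, hy⟩ := h T₁.root
    exact dup_mono T₁ T₂ _ _ ps _ (fun a ha => List.mem_cons_of_mem _ ha) hy

theorem dup_swap (T₁ T₂ : RTree) :
    ∀ (sched : List ℕ) (side : Bool) (ps : List (T₁.V × T₂.V)),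
      DupWinsSched T₁ T₂ sched side ps →
      DupWinsSched T₂ T₁ sched (!side) (ps.map Prod.swap)
  | [], side, ps, h => by
      rw [dws_nil] at h ⊢
      intro p hp q hq
      simp only [List.mem_map] at hp hq
      obtain ⟨p', hp', rfl⟩ := hp
      obtain ⟨q', hq', rfl⟩ := hq
      obtain ⟨h1, h2⟩ := h p' hp' q' hq'
      exact ⟨h1.symm, h2.symm⟩
  | 0 :: rest, side, ps, h => by
      rw [dws_zero] at h ⊢
      exact dup_swap T₁ T₂ rest (!side) ps h
  | (n+1) :: rest, true, ps, h => by
      rw [dws_succ_true] at h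
      rw [show (!true) = false from rfl, dws_succ_false]
      intro y
      obtain ⟨y', hy'⟩ := h y
      exact ⟨y', dup_swap T₁ T₂ (n :: rest) true _ hy'⟩
  | (n+1) :: rest, false, ps, h => by
      rw [dws_succ_false] at h
      rw [show (!false) = true from rfl, dws_succ_true]
      intro x
      obtain ⟨x', hx'⟩ := h x
      exact ⟨x', dup_swap T₁ T₂ (n :: rest) false _ hx'⟩
  termination_by sched _ _ => (sched.length, sched.sum)
  decreasing_by
    all_goals
      first
        | exact Prod.Lex.left _ _ (Nat.lt_succ_self _)
        | exact Prod.Lex.right _ (by simp [List.sum_cons])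

def isoOfEq {S T : RTree} (h : S = T) : TreeIso S T :=
  h ▸ ⟨Equiv.refl _, rfl, by intro v; simp⟩

theorem dup_iso {S T : RTree} (φ : TreeIso S T) :
    ∀ (sched : List ℕ) (side : Bool) (l : List S.V),
      DupWinsSched S T sched side (l.map fun x => (x, φ.toEquiv x))
  | [], side, l => by
      rw [dws_nil]
      intro p hp q hq
      simp only [List.mem_map] at hp hq
      obtain ⟨x, hx, rfl⟩ := hp
      obtain ⟨y, hy, rfl⟩ := hq
      constructor
      · rw [← φ.map_parent]
        simp [Option.map_eq_some_iff, φ.toEquiv.injective.eq_iff]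
      · simp [φ.toEquiv.injective.eq_iff]
  | 0 :: rest, side, l => by
      rw [dws_zero]; exact dup_iso φ rest (!side) l
  | (n+1) :: rest, true, l => by
      rw [dws_succ_true]
      intro x
      exact ⟨φ.toEquiv x, by
        have := dup_iso φ (n :: rest) true (x :: l)
        simpa using this⟩
  | (n+1) :: rest, false, l => by
      rw [dws_succ_false]
      intro y
      refine ⟨φ.toEquiv.symm y, ?_⟩
      have := dup_iso φ (n :: rest) false (φ.toEquiv.symm y :: l)
      simpa using this
  termination_by sched _ _ => (sched.length, sched.sum)
  decreasing_by
    all_goals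
      first
        | exact Prod.Lex.left _ _ (Nat.lt_succ_self _)
        | exact Prod.Lex.right _ (by simp [List.sum_cons])
/-! ### Facts about `hang` -/

def RootP (T : RTree) : Prop := ∀ v, T.parent v = none ↔ v = T.root

theorem rootP_single : RootP single := by
  intro v; simp [single]; rfl

theorem rootP_hang (n : ℕ) (f : Fin n → RTree) : RootP (hang n f) := by
  intro v
  cases v with
  | inl u => simp [hang]
  | inr p =>
    obtain ⟨i, w⟩ := p
    cases h : (f i).parent w <;> simp [hang, h]

theorem hang_parent_inl (n : ℕ) (f : Fin n → RTree) (u : Unit) :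
    (hang n f).parent (Sum.inl u) = none := rfl

theorem hang_parent_eq_inl {n : ℕ} {f : Fin n → RTree} (i : Fin n) (w : (f i).V) (u : Unit) :
    (hang n f).parent (Sum.inr ⟨i, w⟩) = some (Sum.inl u) ↔ (f i).parent w = none := by
  cases h : (f i).parent w <;> simp [hang, h]

theorem hang_parent_eq_inr {n : ℕ} {f : Fin n → RTree} (i : Fin n) (w w' : (f i).V) :
    (hang n f).parent (Sum.inr ⟨i, w⟩) = some (Sum.inr ⟨i, w'⟩) ↔ (f i).parent w = some w' := by
  cases h : (f i).parent w <;> simp [hang, h]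

theorem hang_parent_ne_inr {n : ℕ} {f : Fin n → RTree} {i i' : Fin n} (hne : i ≠ i')
    (w : (f i).V) (w' : (f i').V) :
    ¬ (hang n f).parent (Sum.inr ⟨i, w⟩) = some (Sum.inr ⟨i', w'⟩) := by
  cases h : (f i).parent w <;> simp [hang, h, hne]
/-! ### The block invariant -/

structure Blk (m : ℕ) (B : RTree) (g : Fin (m+1) → RTree) where
  i : Fin (m+1)
  j : Fin (m+1)
  tr : List (B.V × (g j).V)

def GInv (m k s' : ℕ) (B : RTree) (g : Fin (m+1) → RTree) (sched : List ℕ) (side : Bool)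
    (ps : List ((hang (m+1) fun _ => B).V × (hang (m+1) g).V)) : Prop :=
  ∃ ms : List (Blk m B g),
    ms.Pairwise (fun b c => b.i ≠ c.i ∧ b.j ≠ c.j) ∧
    (∀ b ∈ ms, (B.root, (g b.j).root) ∈ b.tr) ∧
    (∀ b ∈ ms, DupWinsSched B (g b.j) sched side b.tr) ∧
    (∀ p ∈ ps, p = (Sum.inl (), Sum.inl ()) ∨
      ∃ b ∈ ms, ∃ q ∈ b.tr, p = (Sum.inr ⟨b.i, q.1⟩, Sum.inr ⟨b.j, q.2⟩)) ∧
    ms.length + sched.sum ≤ m ∧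
    (∀ a ∈ sched, a ≤ k) ∧
    sched.length ≤ (if side then s' + 1 else s')

theorem exists_fresh_fin {N : ℕ} (l : List (Fin N)) (h : l.length < N) :
    ∃ x : Fin N, ∀ y ∈ l, y ≠ x := by
  by_contra hc
  push_neg at hc
  have hsub : (Finset.univ : Finset (Fin N)) ⊆ l.toFinset := by
    intro x _
    rcases hc x with ⟨y, hy, rfl⟩
    exact List.mem_toFinset.2 hy
  have h1 := Finset.card_le_card hsub
  have h2 := List.toFinset_card_le l
  simp [Finset.card_univ] at h1
  omega

theorem exists_fresh_fin_ne {m : ℕ} (l : List (Fin (m+1))) (h : l.length < m) :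
    ∃ x : Fin (m+1), x ≠ ⟨m, Nat.lt_succ_self m⟩ ∧ ∀ y ∈ l, y ≠ x := by
  obtain ⟨x, hx⟩ := exists_fresh_fin ((⟨m, Nat.lt_succ_self m⟩ : Fin (m+1)) :: l)
    (by simp only [List.length_cons]; omega)
  exact ⟨x, Ne.symm (hx _ (List.mem_cons_self)),
    fun y hy => hx y (List.mem_cons_of_mem _ hy)⟩

/-- Terminal case: the invariant at empty schedule yields `GoodPairs`. -/
theorem glue_nil (m k s' : ℕ) (B : RTree) (g : Fin (m+1) → RTree)
    (hRB : RootP B) (hRg : ∀ j, RootP (g j)) (side : Bool)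
    (ps : List ((hang (m+1) fun _ => B).V × (hang (m+1) g).V))
    (hinv : GInv m k s' B g [] side ps) :
    GoodPairs (hang (m+1) fun _ => B) (hang (m+1) g) ps := by
  obtain ⟨ms, hpw, hroot, hstr, hcov, -⟩ := hinv
  have hgp : ∀ b ∈ ms, GoodPairs B (g b.j) b.tr := fun b hb => dws_nil.1 (hstr b hb)
  have hsymm : Symmetric (fun b c : Blk m B g => b.i ≠ c.i ∧ b.j ≠ c.j) :=
    fun x y h => ⟨h.1.symm, h.2.symm⟩
  intro p hp q hq
  rcases hcov p hp with rfl | ⟨b, hb, ⟨w1, w2⟩, hw, rfl⟩ <;>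
    rcases hcov q hq with rfl | ⟨c, hc, ⟨v1, v2⟩, hv, rfl⟩
  · constructor <;> simp [hang]
  · constructor <;> simp [hang]
  · constructor
    · show (hang (m+1) fun _ => B).parent (Sum.inr ⟨b.i, w1⟩) = some (Sum.inl ()) ↔
        (hang (m+1) g).parent (Sum.inr ⟨b.j, w2⟩) = some (Sum.inl ())
      rw [hang_parent_eq_inl, hang_parent_eq_inl, hRB w1, hRg b.j w2]
      exact (hgp b hb (w1, w2) hw (B.root, (g b.j).root) (hroot b hb)).2
    · simp
  · by_cases hbc : b = c
    · subst hbc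
      obtain ⟨h1, h2⟩ := hgp b hb (w1, w2) hw (v1, v2) hv
      constructor
      · show (hang (m+1) fun _ => B).parent (Sum.inr ⟨b.i, w1⟩) = some (Sum.inr ⟨b.i, v1⟩) ↔
          (hang (m+1) g).parent (Sum.inr ⟨b.j, w2⟩) = some (Sum.inr ⟨b.j, v2⟩)
        rw [hang_parent_eq_inr, hang_parent_eq_inr]
        exact h1
      · show (Sum.inr ⟨b.i, w1⟩ : (hang (m+1) fun _ => B).V) = Sum.inr ⟨b.i, v1⟩ ↔
          (Sum.inr ⟨b.j, w2⟩ : (hang (m+1) g).V) = Sum.inr ⟨b.j, v2⟩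
        simp only [Sum.inr.injEq]
        simpa using h2
    · obtain ⟨hi, hj⟩ := (haveI : Std.Symm (fun b c : Blk m B g => b.i ≠ c.i ∧ b.j ≠ c.j) := ⟨fun _ _ h => hsymm h⟩; hpw.forall hb hc hbc)
      constructor
      · exact iff_of_false (hang_parent_ne_inr hi _ _) (hang_parent_ne_inr hj _ _)
      · show (Sum.inr ⟨b.i, w1⟩ : (hang (m+1) fun _ => B).V) = Sum.inr ⟨c.i, v1⟩ ↔
          (Sum.inr ⟨b.j, w2⟩ : (hang (m+1) g).V) = Sum.inr ⟨c.j, v2⟩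
        simp only [Sum.inr.injEq]
        simp [Sigma.ext_iff, hi, hj]
theorem glue (m k s' : ℕ) (B : RTree) (g : Fin (m+1) → RTree)
    (hgm : ∀ j : Fin (m+1), j ≠ ⟨m, Nat.lt_succ_self m⟩ → g j = B)
    (hRB : RootP B) (hRg : ∀ j, RootP (g j))
    (hA : ∀ L : List ℕ, L.length ≤ s' → (∀ a ∈ L, a ≤ k) →
      DupWinsSched B (g ⟨m, Nat.lt_succ_self m⟩) L false
        [(B.root, (g ⟨m, Nat.lt_succ_self m⟩).root)]) :
    ∀ (sched : List ℕ) (side : Bool) ps, GInv m k s' B g sched side ps →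
      DupWinsSched (hang (m+1) fun _ => B) (hang (m+1) g) sched side ps
  | [], side, ps, hinv => dws_nil.2 (glue_nil m k s' B g hRB hRg side ps hinv)
  | 0 :: rest, side, ps, hinv => by
      rw [dws_zero]
      obtain ⟨ms, h1, h2, h3, h4, h5, h6, h7⟩ := hinv
      refine glue m k s' B g hgm hRB hRg hA rest (!side) ps
        ⟨ms, h1, h2, fun b hb => dws_zero.1 (h3 b hb), h4, ?_, ?_, ?_⟩
      · simpa using h5
      · exact fun a ha => h6 a (List.mem_cons_of_mem _ ha)
      · cases side <;> simp at h7 ⊢ <;> omega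
  | (n+1) :: rest, true, ps, hinv => by
      rw [dws_succ_true]
      obtain ⟨ms, h1, h2, h3, h4, h5, h6, h7⟩ := hinv
      have hsymm : Symmetric (fun b c : Blk m B g => b.i ≠ c.i ∧ b.j ≠ c.j) :=
        fun x y h => ⟨h.1.symm, h.2.symm⟩
      have hent : ∀ a ∈ n :: rest, a ≤ k := by
        intro a ha
        rcases List.mem_cons.1 ha with rfl | ha'
        · exact Nat.le_of_succ_le (h6 _ (List.mem_cons_self))
        · exact h6 a (List.mem_cons_of_mem _ ha')
      intro x
      cases x with
      | inl u =>
        refine ⟨Sum.inl (), glue m k s' B g hgm hRB hRg hA (n :: rest) true _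
          ⟨ms, h1, h2, fun b hb => dup_pass (h3 b hb), ?_, ?_, hent, by simpa using h7⟩⟩
        · intro p hp
          rcases List.mem_cons.1 hp with rfl | hp'
          · left; cases u; rfl
          · exact h4 p hp'
        · simp only [List.sum_cons] at h5 ⊢; omega
      | inr p =>
        obtain ⟨i, w⟩ := p
        by_cases hex : ∃ b ∈ ms, b.i = i
        · obtain ⟨b, hbmem, rfl⟩ := hex
          have hstr := h3 b hbmem
          rw [dws_succ_true] at hstr
          obtain ⟨y', hy'⟩ := hstr w
          obtain ⟨l₁, l₂, rfl⟩ := List.append_of_mem hbmem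
          have hmem : ∀ c ∈ l₁ ++ l₂, c ∈ l₁ ++ b :: l₂ := by
            intro c hc
            rcases List.mem_append.1 hc with h | h
            · exact List.mem_append_left _ h
            · exact List.mem_append_right _ (List.mem_cons_of_mem _ h)
          have h1' : List.Pairwise (fun b c : Blk m B g => b.i ≠ c.i ∧ b.j ≠ c.j)
              (b :: (l₁ ++ l₂)) := (List.perm_middle.pairwise_iff (fun hab => ⟨hab.1.symm, hab.2.symm⟩)).1 h1
          rcases List.pairwise_cons.1 h1' with ⟨hb1, hb2⟩
          refine ⟨Sum.inr ⟨b.j, y'⟩, glue m k s' B g hgm hRB hRg hA (n :: rest) true _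
            ⟨⟨b.i, b.j, (w, y') :: b.tr⟩ :: (l₁ ++ l₂), ?_, ?_, ?_, ?_, ?_, hent, by simpa using h7⟩⟩
          · exact List.pairwise_cons.2 ⟨fun c hc => hb1 c hc, hb2⟩
          · intro c hc
            rcases List.mem_cons.1 hc with rfl | hc'
            · exact List.mem_cons_of_mem _ (h2 b hbmem)
            · exact h2 c (hmem c hc')
          · intro c hc
            rcases List.mem_cons.1 hc with rfl | hc'
            · exact hy'
            · exact dup_pass (h3 c (hmem c hc'))
          · intro p hp
            rcases List.mem_cons.1 hp with rfl | hp'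
            · right
              exact ⟨⟨b.i, b.j, (w, y') :: b.tr⟩, List.mem_cons_self,
                (w, y'), List.mem_cons_self, rfl⟩
            · rcases h4 p hp' with rfl | ⟨c, hc, q, hq, rfl⟩
              · left; rfl
              · right
                rcases List.mem_append.1 hc with hcl | hcr
                · exact ⟨c, List.mem_cons_of_mem _ (List.mem_append_left _ hcl), q, hq, rfl⟩
                · rcases List.mem_cons.1 hcr with rfl | hcr'
                  · exact ⟨⟨c.i, c.j, (w, y') :: c.tr⟩, List.mem_cons_self,
                      q, List.mem_cons_of_mem _ hq, rfl⟩
                  · exact ⟨c, List.mem_cons_of_mem _ (List.mem_append_right _ hcr'), q, hq, rfl⟩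
          · simp only [List.sum_cons, List.length_cons, List.length_append] at h5 ⊢; omega
        · push_neg at hex
          have hlen : ms.length < m := by simp only [List.sum_cons] at h5; omega
          obtain ⟨j, hjm, hjfresh⟩ := exists_fresh_fin_ne (ms.map Blk.j) (by simpa using hlen)
          have φ : TreeIso B (g j) := isoOfEq (hgm j hjm).symm
          have hstr := dup_iso φ ((n+1) :: rest) true [B.root]
          rw [dws_succ_true] at hstr
          obtain ⟨y', hy'⟩ := hstr w
          simp only [List.map_cons, List.map_nil, φ.map_root] at hy'
          refine ⟨Sum.inr ⟨j, y'⟩, glue m k s' B g hgm hRB hRg hA (n :: rest) true _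
            ⟨⟨i, j, [(w, y'), (B.root, (g j).root)]⟩ :: ms, ?_, ?_, ?_, ?_, ?_, hent,
              by simpa using h7⟩⟩
          · refine List.pairwise_cons.2 ⟨fun c hc => ⟨(hex c hc).symm, ?_⟩, h1⟩
            exact (hjfresh c.j (List.mem_map_of_mem hc)).symm
          · intro c hc
            rcases List.mem_cons.1 hc with rfl | hc'
            · exact List.mem_cons_of_mem _ (List.mem_cons_self)
            · exact h2 c hc'
          · intro c hc
            rcases List.mem_cons.1 hc with rfl | hc'
            · exact hy'
            · exact dup_pass (h3 c hc')
          · intro p hp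
            rcases List.mem_cons.1 hp with rfl | hp'
            · right
              exact ⟨⟨i, j, [(w, y'), (B.root, (g j).root)]⟩, List.mem_cons_self,
                (w, y'), List.mem_cons_self, rfl⟩
            · rcases h4 p hp' with rfl | ⟨c, hc, q, hq, rfl⟩
              · left; rfl
              · exact Or.inr ⟨c, List.mem_cons_of_mem _ hc, q, hq, rfl⟩
          · simp only [List.sum_cons, List.length_cons] at h5 ⊢; omega
  | (n+1) :: rest, false, ps, hinv => by
      rw [dws_succ_false]
      obtain ⟨ms, h1, h2, h3, h4, h5, h6, h7⟩ := hinv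
      have hsymm : Symmetric (fun b c : Blk m B g => b.i ≠ c.i ∧ b.j ≠ c.j) :=
        fun x y h => ⟨h.1.symm, h.2.symm⟩
      have hent : ∀ a ∈ n :: rest, a ≤ k := by
        intro a ha
        rcases List.mem_cons.1 ha with rfl | ha'
        · exact Nat.le_of_succ_le (h6 _ (List.mem_cons_self))
        · exact h6 a (List.mem_cons_of_mem _ ha')
      intro y
      cases y with
      | inl u =>
        refine ⟨Sum.inl (), glue m k s' B g hgm hRB hRg hA (n :: rest) false _
          ⟨ms, h1, h2, fun b hb => dup_pass (h3 b hb), ?_, ?_, hent, by simpa using h7⟩⟩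
        · intro p hp
          rcases List.mem_cons.1 hp with rfl | hp'
          · left; cases u; rfl
          · exact h4 p hp'
        · simp only [List.sum_cons] at h5 ⊢; omega
      | inr p =>
        obtain ⟨j, w⟩ := p
        by_cases hex : ∃ b ∈ ms, b.j = j
        · obtain ⟨b, hbmem, rfl⟩ := hex
          have hstr := h3 b hbmem
          rw [dws_succ_false] at hstr
          obtain ⟨x', hx'⟩ := hstr w
          obtain ⟨l₁, l₂, rfl⟩ := List.append_of_mem hbmem
          have hmem : ∀ c ∈ l₁ ++ l₂, c ∈ l₁ ++ b :: l₂ := by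
            intro c hc
            rcases List.mem_append.1 hc with h | h
            · exact List.mem_append_left _ h
            · exact List.mem_append_right _ (List.mem_cons_of_mem _ h)
          have h1' : List.Pairwise (fun b c : Blk m B g => b.i ≠ c.i ∧ b.j ≠ c.j)
              (b :: (l₁ ++ l₂)) := (List.perm_middle.pairwise_iff (fun hab => ⟨hab.1.symm, hab.2.symm⟩)).1 h1
          rcases List.pairwise_cons.1 h1' with ⟨hb1, hb2⟩
          refine ⟨Sum.inr ⟨b.i, x'⟩, glue m k s' B g hgm hRB hRg hA (n :: rest) false _
            ⟨⟨b.i, b.j, (x', w) :: b.tr⟩ :: (l₁ ++ l₂), ?_, ?_, ?_, ?_, ?_, hent, by simpa using h7⟩⟩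
          · exact List.pairwise_cons.2 ⟨fun c hc => hb1 c hc, hb2⟩
          · intro c hc
            rcases List.mem_cons.1 hc with rfl | hc'
            · exact List.mem_cons_of_mem _ (h2 b hbmem)
            · exact h2 c (hmem c hc')
          · intro c hc
            rcases List.mem_cons.1 hc with rfl | hc'
            · exact hx'
            · exact dup_pass (h3 c (hmem c hc'))
          · intro p hp
            rcases List.mem_cons.1 hp with rfl | hp'
            · right
              exact ⟨⟨b.i, b.j, (x', w) :: b.tr⟩, List.mem_cons_self,
                (x', w), List.mem_cons_self, rfl⟩
            · rcases h4 p hp' with rfl | ⟨c, hc, q, hq, rfl⟩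
              · left; rfl
              · right
                rcases List.mem_append.1 hc with hcl | hcr
                · exact ⟨c, List.mem_cons_of_mem _ (List.mem_append_left _ hcl), q, hq, rfl⟩
                · rcases List.mem_cons.1 hcr with rfl | hcr'
                  · exact ⟨⟨c.i, c.j, (x', w) :: c.tr⟩, List.mem_cons_self,
                      q, List.mem_cons_of_mem _ hq, rfl⟩
                  · exact ⟨c, List.mem_cons_of_mem _ (List.mem_append_right _ hcr'), q, hq, rfl⟩
          · simp only [List.sum_cons, List.length_cons, List.length_append] at h5 ⊢; omega
        · push_neg at hex
          have hlen : ms.length < m := by simp only [List.sum_cons] at h5; omega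
          obtain ⟨i, hifresh⟩ := exists_fresh_fin (ms.map Blk.i)
            (by simp only [List.length_map]; omega)
          by_cases hjm : j = ⟨m, Nat.lt_succ_self m⟩
          · subst hjm
            have hstr := hA ((n+1) :: rest) (by simpa using h7) h6
            rw [dws_succ_false] at hstr
            obtain ⟨x', hx'⟩ := hstr w
            refine ⟨Sum.inr ⟨i, x'⟩, glue m k s' B g hgm hRB hRg hA (n :: rest) false _
              ⟨⟨i, ⟨m, Nat.lt_succ_self m⟩,
                  (x', w) :: [(B.root, (g ⟨m, Nat.lt_succ_self m⟩).root)]⟩ :: ms,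
                ?_, ?_, ?_, ?_, ?_, hent, by simpa using h7⟩⟩
            · refine List.pairwise_cons.2 ⟨fun c hc =>
                ⟨(hifresh c.i (List.mem_map_of_mem hc)).symm, (hex c hc).symm⟩, h1⟩
            · intro c hc
              rcases List.mem_cons.1 hc with rfl | hc'
              · exact List.mem_cons_of_mem _ (List.mem_cons_self)
              · exact h2 c hc'
            · intro c hc
              rcases List.mem_cons.1 hc with rfl | hc'
              · exact hx'
              · exact dup_pass (h3 c hc')
            · intro p hp
              rcases List.mem_cons.1 hp with rfl | hp'
              · right
                exact ⟨_, List.mem_cons_self, (x', w), List.mem_cons_self, rfl⟩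
              · rcases h4 p hp' with rfl | ⟨c, hc, q, hq, rfl⟩
                · left; rfl
                · exact Or.inr ⟨c, List.mem_cons_of_mem _ hc, q, hq, rfl⟩
            · simp only [List.sum_cons, List.length_cons] at h5 ⊢; omega
          · have φ : TreeIso B (g j) := isoOfEq (hgm j hjm).symm
            have hstr := dup_iso φ ((n+1) :: rest) false [B.root]
            rw [dws_succ_false] at hstr
            obtain ⟨x', hx'⟩ := hstr w
            simp only [List.map_cons, List.map_nil, φ.map_root] at hx'
            refine ⟨Sum.inr ⟨i, x'⟩, glue m k s' B g hgm hRB hRg hA (n :: rest) false _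
              ⟨⟨i, j, [(x', w), (B.root, (g j).root)]⟩ :: ms, ?_, ?_, ?_, ?_, ?_, hent,
                by simpa using h7⟩⟩
            · refine List.pairwise_cons.2 ⟨fun c hc =>
                ⟨(hifresh c.i (List.mem_map_of_mem hc)).symm, (hex c hc).symm⟩, h1⟩
            · intro c hc
              rcases List.mem_cons.1 hc with rfl | hc'
              · exact List.mem_cons_of_mem _ (List.mem_cons_self)
              · exact h2 c hc'
            · intro c hc
              rcases List.mem_cons.1 hc with rfl | hc'
              · exact hx'
              · exact dup_pass (h3 c hc')
            · intro p hp
              rcases List.mem_cons.1 hp with rfl | hp'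
              · right
                exact ⟨_, List.mem_cons_self, (x', w), List.mem_cons_self, rfl⟩
              · rcases h4 p hp' with rfl | ⟨c, hc, q, hq, rfl⟩
                · left; rfl
                · exact Or.inr ⟨c, List.mem_cons_of_mem _ hc, q, hq, rfl⟩
            · simp only [List.sum_cons, List.length_cons] at h5 ⊢; omega
  termination_by sched _ _ _ => (sched.length, sched.sum)
  decreasing_by
    all_goals
      first
        | exact Prod.Lex.left _ _ (Nat.lt_succ_self _)
        | exact Prod.Lex.right _ (by simp [List.sum_cons])
theorem rootP_treePair (m : ℕ) : ∀ s, RootP (TreePair m s).1 ∧ RootP (TreePair m s).2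
  | 0 => ⟨rootP_single, rootP_hang _ _⟩
  | _ + 1 => ⟨rootP_hang _ _, rootP_hang _ _⟩

theorem claim (k : ℕ) : ∀ (s m : ℕ), s * k ≤ m →
    ∀ L : List ℕ, (∀ a ∈ L, a ≤ k) →
      (L.length ≤ s →
        DupWinsSched (TreePair m s).1 (TreePair m s).2 L true
          [((TreePair m s).1.root, (TreePair m s).2.root)]) ∧
      (L.length ≤ s →
        DupWinsSched (TreePair m s).2 (TreePair m s).1 L false
          [((TreePair m s).2.root, (TreePair m s).1.root)])
  | 0, m, hm, L, hL => by
      constructor <;> intro hlen <;>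
        rw [List.eq_nil_of_length_eq_zero (Nat.le_zero.1 hlen)] <;>
        · rw [dws_nil]
          intro p hp q hq
          rw [List.mem_singleton] at hp hq
          subst hp; subst hq
          constructor <;> simp [TreePair, single, hang, RTree.parent]
  | s + 1, m, hm, L, hL => by
      have hm' : s * k ≤ m := le_trans (Nat.mul_le_mul_right k (Nat.le_succ s)) hm
      have IH := claim k s m hm'
      have hmain : L.length ≤ s + 1 →
          DupWinsSched (TreePair m (s+1)).1 (TreePair m (s+1)).2 L true
            [((TreePair m (s+1)).1.root, (TreePair m (s+1)).2.root)] := by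
        intro hlen
        show DupWinsSched (hang (m+1) fun _ => (TreePair m s).2)
          (hang (m+1) fun i => if i.1 = m then (TreePair m s).1 else (TreePair m s).2) L true _
        refine glue m k s (TreePair m s).2
          (fun i => if i.1 = m then (TreePair m s).1 else (TreePair m s).2)
          (fun j hj => if_neg fun h => hj (Fin.ext h))
          (rootP_treePair m s).2
          (fun j => by
            split
            · exact (rootP_treePair m s).1
            · exact (rootP_treePair m s).2)
          (fun L' h1 h2 => by
            have hthis := (IH L' h2).2 h1
            have he : (fun i : Fin (m+1) =>
                if i.1 = m then (TreePair m s).1 else (TreePair m s).2)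
                  ⟨m, Nat.lt_succ_self m⟩ = (TreePair m s).1 := if_pos rfl
            rw [← he] at hthis
            exact hthis)
          L true _ ⟨[], ?_, ?_, ?_, ?_, ?_, hL, ?_⟩
        · simp
        · simp
        · simp
        · intro p hp
          replace hp := List.mem_singleton.1 hp
          subst hp
          left; rfl
        · have hsum : L.sum ≤ L.length * k := by
            calc L.sum ≤ L.length • k := List.sum_le_card_nsmul L k hL
            _ = L.length * k := by simp [smul_eq_mul]
          have : L.length * k ≤ (s + 1) * k := Nat.mul_le_mul_right k hlen
          simpa using le_trans hsum (le_trans this hm)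
        · simpa using hlen
      refine ⟨hmain, fun hlen => ?_⟩
      have := dup_swap _ _ L true _ (hmain hlen)
      simpa using this

/-- For every positive `s`, positive `k` and `m ≥ s·k`, Duplicator
wins `ehr[T₁^{(s,k,m)}, T₂^{(s,k,m)}, s; k]` when Spoiler starts playing on
`T₁^{(s,k,m)}`. -/
theorem dup_wins_ehr_trees_start_T1 (s k m : ℕ) (hs : 0 < s) (hk : 0 < k) (hm : s * k ≤ m) :
    DupWinsSched (Tree1 s k m) (Tree2 s k m) (List.replicate s k) true
      [((Tree1 s k m).root, (Tree2 s k m).root)] := by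
  exact (claim k s m hm (List.replicate s k)
    (fun a ha => le_of_eq (List.eq_of_mem_replicate ha))).1 (by simp)
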